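/- Consider the continuous-time linear closed-loop comparison: let A, B, C̲, C̄, D, d̲, d̄ be fixed matrices/vectors, and define two vector fields on ℝ²ⁿ: F^con(x, x̂) = (([A]^M + [B⁺C̲ + B⁻C̄]^M)x + ([A]^nM + [B⁺C̲ + B⁻C̄]^nM)x̂ + c̲, ([A]^nM + [B⁺C̄ + B⁻C̲]^nM)x + ([A]^M + [B⁺C̄ + B⁻C̲]^M)x̂ + c̄) and F^act(x, x̂) = ([A + B⁺C̲ + B⁻C̄]^M x + [A + B⁺C̲ + B⁻C̄]^nM x̂ + c̲, [A + B⁺C̄ + B⁻C̲]^nM x + [A + B⁺C̄ + B⁻C̲]^M x̂ + c̄) for fixed offsets c̲, c̄. Then for every x ≤ x̂: F^con(x, x̂) ≤_SE F^act(x, x̂), i.e., the lower component of F^con is ≤ that of F^act and the upper component of F^con is ≥ that of F^act. -/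

import Mathlib

/-- Entrywise nonnegative part of a matrix. -/
def mpos {m n : ℕ} (A : Matrix (Fin m) (Fin n) ℝ) : Matrix (Fin m) (Fin n) ℝ :=
  fun i j => max (A i j) 0

/-- Entrywise nonpositive part of a matrix. -/
def mneg {m n : ℕ} (A : Matrix (Fin m) (Fin n) ℝ) : Matrix (Fin m) (Fin n) ℝ :=
  fun i j => min (A i j) 0

/-- Metzler part of a square matrix. -/
noncomputable def metzler {n : ℕ} (A : Matrix (Fin n) (Fin n) ℝ) :
    Matrix (Fin n) (Fin n) ℝ :=
  fun i j => if 0 ≤ A i j ∨ i = j then A i j else 0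

/-- Non-Metzler part of a square matrix. -/
noncomputable def nonMetzler {n : ℕ} (A : Matrix (Fin n) (Fin n) ℝ) :
    Matrix (Fin n) (Fin n) ℝ :=
  A - metzler A

lemma metzler_add_le {n : ℕ} (A C : Matrix (Fin n) (Fin n) ℝ) (i j : Fin n) :
    metzler (A + C) i j ≤ metzler A i j + metzler C i j := by
  simp only [metzler, Matrix.add_apply]
  by_cases h : i = j
  · simp [h]
  · simp only [h, or_false]
    split_ifs <;> linarith

/-- scalar comparison lemma -/
lemma scal_le (m1 m2 s u v : ℝ) (hm : m2 ≤ m1) (huv : u ≤ v) :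
    m1 * u + (s - m1) * v ≤ m2 * u + (s - m2) * v := by nlinarith

lemma key {n : ℕ} (A C : Matrix (Fin n) (Fin n) ℝ) (x xh : Fin n → ℝ) (hx : x ≤ xh) :
    (metzler A + metzler C).mulVec x + (nonMetzler A + nonMetzler C).mulVec xh ≤
    (metzler (A + C)).mulVec x + (nonMetzler (A + C)).mulVec xh := by
  intro i
  simp only [Pi.add_apply, Matrix.mulVec, dotProduct, Matrix.add_apply]
  rw [← Finset.sum_add_distrib, ← Finset.sum_add_distrib]
  apply Finset.sum_le_sum
  intro j _
  have h1 : nonMetzler A i j + nonMetzler C i j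
      = (A + C) i j - (metzler A i j + metzler C i j) := by
    simp [nonMetzler, Matrix.sub_apply, Matrix.add_apply]; ring
  have h2 : nonMetzler (A + C) i j = (A + C) i j - metzler (A + C) i j := by
    simp [nonMetzler, Matrix.sub_apply]
  rw [h1, h2]
  exact scal_le _ _ _ _ _ (metzler_add_le A C i j) (hx j)


lemma key2 {n : ℕ} (A C : Matrix (Fin n) (Fin n) ℝ) (x xh : Fin n → ℝ) (hx : x ≤ xh) :
    (nonMetzler (A + C)).mulVec x + (metzler (A + C)).mulVec xh ≤
    (nonMetzler A + nonMetzler C).mulVec x + (metzler A + metzler C).mulVec xh := by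
  intro i
  simp only [Pi.add_apply, Matrix.mulVec, dotProduct, Matrix.add_apply]
  rw [← Finset.sum_add_distrib, ← Finset.sum_add_distrib]
  apply Finset.sum_le_sum
  intro j _
  have h1 : nonMetzler A i j + nonMetzler C i j
      = (A + C) i j - (metzler A i j + metzler C i j) := by
    simp [nonMetzler, Matrix.sub_apply, Matrix.add_apply]; ring
  have h2 : nonMetzler (A + C) i j = (A + C) i j - metzler (A + C) i j := by
    simp [nonMetzler, Matrix.sub_apply]
  rw [h1, h2]
  have := metzler_add_le A C i j
  have := hx j
  nlinarith

theorem stmt17 {n p : ℕ}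
    (A : Matrix (Fin n) (Fin n) ℝ) (B : Matrix (Fin n) (Fin p) ℝ)
    (Clo Chi : Matrix (Fin p) (Fin n) ℝ) (clo chi : Fin n → ℝ)
    (x xh : Fin n → ℝ) (hx : x ≤ xh) :
    -- lower components
    ((metzler A + metzler (mpos B * Clo + mneg B * Chi)).mulVec x +
      (nonMetzler A + nonMetzler (mpos B * Clo + mneg B * Chi)).mulVec xh + clo ≤
      (metzler (A + mpos B * Clo + mneg B * Chi)).mulVec x +
      (nonMetzler (A + mpos B * Clo + mneg B * Chi)).mulVec xh + clo) ∧
    -- upper components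
    ((nonMetzler (A + mpos B * Chi + mneg B * Clo)).mulVec x +
      (metzler (A + mpos B * Chi + mneg B * Clo)).mulVec xh + chi ≤
      (nonMetzler A + nonMetzler (mpos B * Chi + mneg B * Clo)).mulVec x +
      (metzler A + metzler (mpos B * Chi + mneg B * Clo)).mulVec xh + chi) := by
  constructor
  · have h := key A (mpos B * Clo + mneg B * Chi) x xh hx
    intro i
    have := h i
    simp only [Pi.add_apply] at this ⊢
    have hA : A + mpos B * Clo + mneg B * Chi = A + (mpos B * Clo + mneg B * Chi) := by
      rw [add_assoc]
    rw [hA]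
    linarith
  · have h := key2 A (mpos B * Chi + mneg B * Clo) x xh hx
    intro i
    have := h i
    simp only [Pi.add_apply] at this ⊢
    have hA : A + mpos B * Chi + mneg B * Clo = A + (mpos B * Chi + mneg B * Clo) := by
      rw [add_assoc]
    rw [hA]
    linarith
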